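/- For n ≥ 4, the Lucas cube Λ_n admits no perfect code; combined with the easy cases, Λ_n admits a perfect code if and only if n ≤ 3. -/

import Mathlib

def isFib {n : ℕ} (b : Fin n → Bool) : Prop :=
  ∀ i : Fin n, ∀ h : (i : ℕ) + 1 < n, ¬(b i = true ∧ b ⟨(i : ℕ) + 1, h⟩ = true)

def isLucas {n : ℕ} (b : Fin n → Bool) : Prop :=
  isFib b ∧ ∀ h0 : 0 < n, ¬(b ⟨0, h0⟩ = true ∧ b ⟨n - 1, by omega⟩ = true)

def wt {n : ℕ} (b : Fin n → Bool) : ℕ :=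
  (Finset.univ.filter fun i => b i = true).card

def lucasCube (n : ℕ) : SimpleGraph {b : Fin n → Bool // isLucas b} where
  Adj x y := hammingDist x.1 y.1 = 1
  symm := ⟨fun x y h => by show hammingDist y.1 x.1 = 1; rw [hammingDist_comm]; exact h⟩
  loopless := ⟨fun x h => by
    have h' : hammingDist x.1 x.1 = 1 := h
    simp only [hammingDist_self] at h'; exact absurd h' (by omega)⟩

def IsPerfectCode {V : Type*} (G : SimpleGraph V) (C : Set V) : Prop :=
  ∀ v : V, ∃! c : V, c ∈ C ∧ (v = c ∨ G.Adj v c)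

def ch (a b : ℤ) : ℕ := if 0 ≤ a ∧ 0 ≤ b then a.toNat.choose b.toNat else 0

open Finset

noncomputable section
open Classical

abbrev LV (n : ℕ) := {b : Fin n → Bool // isLucas b}

variable {n : ℕ}

instance : Fintype (LV n) := Fintype.ofFinite _

def suppv (v : LV n) : Finset (Fin n) := univ.filter (fun i => v.1 i = true)

lemma mem_suppv {v : LV n} {i : Fin n} : i ∈ suppv v ↔ v.1 i = true := by
  simp [suppv]

lemma suppv_inj : Function.Injective (@suppv n) := by
  intro x y h
  apply Subtype.ext; funext k
  have := Finset.ext_iff.mp h k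
  simp only [mem_suppv] at this
  cases hx : x.1 k <;> cases hy : y.1 k <;> simp_all

/-- cyclic characterization -/
lemma isLucas_iff (b : Fin n → Bool) :
    isLucas b ↔ ∀ x y : Fin n, b x = true → b y = true → ((x : ℕ) + 1) % n ≠ (y : ℕ) := by
  constructor
  · rintro ⟨hf, he⟩ x y hx hy heq
    by_cases h : (x : ℕ) + 1 < n
    · rw [Nat.mod_eq_of_lt h] at heq
      exact hf x h ⟨hx, by rwa [show (⟨(x:ℕ)+1, h⟩ : Fin n) = y from Fin.ext heq]⟩
    · have hx1 : (x : ℕ) = n - 1 := by have := x.2; omega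
      have hn0 : 0 < n := x.pos
      have : ((x : ℕ) + 1) % n = 0 := by rw [hx1, Nat.sub_add_cancel hn0, Nat.mod_self]
      rw [this] at heq
      exact he hn0 ⟨by rwa [show (⟨0, hn0⟩ : Fin n) = y from Fin.ext heq],
        by rwa [show (⟨n-1, by omega⟩ : Fin n) = x from Fin.ext hx1.symm]⟩
  · intro hc
    constructor
    · intro i h ⟨h1, h2⟩
      exact hc i ⟨(i:ℕ)+1, h⟩ h1 h2 (by simp [Nat.mod_eq_of_lt h])
    · intro h0 ⟨h1, h2⟩
      exact hc ⟨n-1, by omega⟩ ⟨0, h0⟩ h2 h1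
        (by simp [Nat.sub_add_cancel h0, Nat.mod_self])

def indepS (S : Finset (Fin n)) : Prop :=
  ∀ x ∈ S, ∀ y ∈ S, ((x : ℕ) + 1) % n ≠ (y : ℕ)

lemma indepS_subset {S T : Finset (Fin n)} (h : S ⊆ T) (hT : indepS T) : indepS S :=
  fun x hx y hy => hT x (h hx) y (h hy)

lemma lucas_indep (v : LV n) : indepS (suppv v) := by
  intro x hx y hy
  exact (isLucas_iff v.1).mp v.2 x y (mem_suppv.mp hx) (mem_suppv.mp hy)

def mkV (S : Finset (Fin n)) (h : indepS S) : LV n :=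
  ⟨fun k => decide (k ∈ S), (isLucas_iff _).mpr (fun x y hx hy =>
    h x (by simpa using hx) y (by simpa using hy))⟩

@[simp] lemma suppv_mkV (S : Finset (Fin n)) (h : indepS S) : suppv (mkV S h) = S := by
  ext k; simp [mem_suppv, mkV]

lemma eq_mkV_of_suppv {v : LV n} {S : Finset (Fin n)} (h : indepS S) (hs : suppv v = S) :
    v = mkV S h := suppv_inj (by rw [suppv_mkV, hs])

def zV : LV n := ⟨fun _ => false, by
  constructor
  · intro i h ⟨h1, _⟩; simp at h1
  · intro h0 ⟨h1, _⟩; simp at h1⟩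

@[simp] lemma suppv_zV : suppv (zV : LV n) = ∅ := by ext k; simp [mem_suppv, zV]


-- ADJACENCY SECTION (to be appended inside noncomputable section)
lemma adj_iff {x y : LV n} :
    (lucasCube n).Adj x y ↔ ∃ j, (j ∉ suppv x ∧ suppv y = insert j (suppv x)) ∨
      (j ∉ suppv y ∧ suppv x = insert j (suppv y)) := by
  show hammingDist x.1 y.1 = 1 ↔ _
  rw [hammingDist, Finset.card_eq_one]
  constructor
  · rintro ⟨j, hj⟩
    have hk : ∀ k, x.1 k ≠ y.1 k ↔ k = j := by
      intro k
      have := Finset.ext_iff.mp hj k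
      simpa using this
    refine ⟨j, ?_⟩
    cases hxj : x.1 j with
    | false =>
      have hyj : y.1 j = true := by
        have := (hk j).mpr rfl; cases hyy : y.1 j; · exact absurd (by rw [hxj, hyy]) this
        · rfl
      refine Or.inl ⟨by simp [mem_suppv, hxj], ?_⟩
      ext k
      by_cases hkj : k = j
      · subst hkj; simp [mem_suppv, hyj]
      · have hxy : x.1 k = y.1 k := by
          by_contra hne; exact hkj ((hk k).mp hne)
        simp [mem_suppv, Finset.mem_insert, hkj, ← hxy]
    | true =>
      have hyj : y.1 j = false := by
        have := (hk j).mpr rfl; cases hyy : y.1 j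
        · rfl
        · exact absurd (by rw [hxj, hyy]) this
      refine Or.inr ⟨by simp [mem_suppv, hyj], ?_⟩
      ext k
      by_cases hkj : k = j
      · subst hkj; simp [mem_suppv, hxj]
      · have hxy : x.1 k = y.1 k := by
          by_contra hne; exact hkj ((hk k).mp hne)
        simp [mem_suppv, Finset.mem_insert, hkj, hxy]
  · rintro ⟨j, hcase⟩
    refine ⟨j, ?_⟩
    ext k
    simp only [Finset.mem_filter, Finset.mem_univ, true_and, Finset.mem_singleton]
    rcases hcase with ⟨hj, hins⟩ | ⟨hj, hins⟩
    · constructor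
      · intro hne
        by_contra hkj
        have := Finset.ext_iff.mp hins k
        simp only [Finset.mem_insert, hkj, false_or] at this
        rw [mem_suppv, mem_suppv] at this
        cases hxx : x.1 k <;> cases hyy : y.1 k <;> simp_all
      · intro hkj; subst hkj
        have h1 : x.1 k ≠ true := fun h => hj (mem_suppv.mpr h)
        have h2 : y.1 k = true := mem_suppv.mp (by rw [hins]; exact Finset.mem_insert_self _ _)
        cases hxx : x.1 k <;> simp_all
    · constructor
      · intro hne
        by_contra hkj
        have := Finset.ext_iff.mp hins k
        simp only [Finset.mem_insert, hkj, false_or] at this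
        rw [mem_suppv, mem_suppv] at this
        cases hxx : x.1 k <;> cases hyy : y.1 k <;> simp_all
      · intro hkj; subst hkj
        have h1 : y.1 k ≠ true := fun h => hj (mem_suppv.mpr h)
        have h2 : x.1 k = true := mem_suppv.mp (by rw [hins]; exact Finset.mem_insert_self _ _)
        cases hxx : y.1 k <;> simp_all

lemma adj_of_insert {x y : LV n} {j : Fin n} (h1 : j ∉ suppv x)
    (h2 : suppv y = insert j (suppv x)) : (lucasCube n).Adj x y :=
  adj_iff.mpr ⟨j, Or.inl ⟨h1, h2⟩⟩

lemma adj_card {x y : LV n} (h : (lucasCube n).Adj x y) :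
    (suppv y).card = (suppv x).card + 1 ∨ (suppv x).card = (suppv y).card + 1 := by
  rcases adj_iff.mp h with ⟨j, ⟨hj, hins⟩ | ⟨hj, hins⟩⟩
  · left; rw [hins, Finset.card_insert_of_notMem hj]
  · right; rw [hins, Finset.card_insert_of_notMem hj]

lemma adj_subset_succ {x y : LV n} (hsub : suppv x ⊆ suppv y)
    (hc : (suppv y).card = (suppv x).card + 1) : (lucasCube n).Adj x y := by
  have hd : (suppv y \ suppv x).card = 1 := by
    rw [Finset.card_sdiff_of_subset hsub, hc]; omega
  obtain ⟨j, hj⟩ := Finset.card_eq_one.mp hd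
  have hjmem : j ∈ suppv y \ suppv x := by rw [hj]; exact Finset.mem_singleton_self j
  refine adj_of_insert (Finset.mem_sdiff.mp hjmem).2 ?_
  ext k
  simp only [Finset.mem_insert]
  constructor
  · intro hk
    by_cases hkx : k ∈ suppv x
    · exact Or.inr hkx
    · left
      have : k ∈ suppv y \ suppv x := Finset.mem_sdiff.mpr ⟨hk, hkx⟩
      rw [hj] at this; simpa using this
  · rintro (rfl | hk)
    · exact (Finset.mem_sdiff.mp hjmem).1
    · exact hsub hk

lemma not_adj_same_card {x y : LV n} (h : (lucasCube n).Adj x y)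
    (hc : (suppv x).card = (suppv y).card) : False := by
  rcases adj_card h with h1 | h1 <;> omega

variable {C : Set (LV n)}

def Dm (hC : IsPerfectCode (lucasCube n) C) (v : LV n) : LV n := (hC v).choose

lemma Dm_mem (hC : IsPerfectCode (lucasCube n) C) (v : LV n) : Dm hC v ∈ C :=
  (hC v).choose_spec.1.1

lemma Dm_dom (hC : IsPerfectCode (lucasCube n) C) (v : LV n) :
    v = Dm hC v ∨ (lucasCube n).Adj v (Dm hC v) :=
  (hC v).choose_spec.1.2

lemma Dm_eq (hC : IsPerfectCode (lucasCube n) C) {v c : LV n} (hc : c ∈ C)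
    (hd : v = c ∨ (lucasCube n).Adj v c) : c = Dm hC v :=
  (hC v).choose_spec.2 c ⟨hc, hd⟩

lemma Dm_self (hC : IsPerfectCode (lucasCube n) C) {c : LV n} (hc : c ∈ C) :
    Dm hC c = c := (Dm_eq hC hc (Or.inl rfl)).symm

/-- vertices of weight `k` containing `i` -/
def shape (i : Fin n) (k : ℕ) : Finset (LV n) :=
  univ.filter (fun v : LV n => (suppv v).card = k ∧ i ∈ suppv v)

/-- codewords of weight `k` containing `i` -/
def codeShape (C : Set (LV n)) (i : Fin n) (k : ℕ) : Finset (LV n) :=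
  univ.filter (fun c : LV n => c ∈ C ∧ i ∈ suppv c ∧ (suppv c).card = k)

lemma mem_shape {i : Fin n} {k : ℕ} {v : LV n} :
    v ∈ shape i k ↔ (suppv v).card = k ∧ i ∈ suppv v := by simp [shape]

lemma mem_codeShape {i : Fin n} {k : ℕ} {c : LV n} :
    c ∈ codeShape C i k ↔ c ∈ C ∧ i ∈ suppv c ∧ (suppv c).card = k := by simp [codeShape]

lemma master (hC : IsPerfectCode (lucasCube n) C) (i : Fin n) (k : ℕ)
    (Hcls : ∀ P ∈ shape i k, (suppv (Dm hC P)).card = k ∨ (suppv (Dm hC P)).card = k + 1) :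
    (shape i k).card = (codeShape C i k).card + k * (codeShape C i (k+1)).card := by
  classical
  -- every P maps into the union
  have hmap : ∀ P ∈ shape i k, Dm hC P ∈ codeShape C i k ∪ codeShape C i (k+1) := by
    intro P hP
    obtain ⟨hcard, hi⟩ := mem_shape.mp hP
    rcases Hcls P hP with hk' | hk'
    · have hPD : P = Dm hC P := by
        rcases Dm_dom hC P with h | h
        · exact h
        · exact absurd (hcard.trans hk'.symm) (fun hc => not_adj_same_card h hc)
      refine Finset.mem_union_left _ (mem_codeShape.mpr ⟨Dm_mem hC P, ?_, hk'⟩)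
      rwa [← hPD]
    · have hadj : (lucasCube n).Adj P (Dm hC P) := by
        rcases Dm_dom hC P with h | h
        · exfalso; rw [← h] at hk'; omega
        · exact h
      refine Finset.mem_union_right _ (mem_codeShape.mpr ⟨Dm_mem hC P, ?_, hk'⟩)
      rcases adj_iff.mp hadj with ⟨j, ⟨hj, hins⟩ | ⟨hj, hins⟩⟩
      · rw [hins]; exact Finset.mem_insert_of_mem hi
      · exfalso
        rw [hins, Finset.card_insert_of_notMem hj] at hcard
        omega
  rw [Finset.card_eq_sum_card_fiberwise hmap]
  rw [Finset.sum_union (by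
    rw [Finset.disjoint_left]
    intro c hc1 hc2
    have := (mem_codeShape.mp hc1).2.2
    have := (mem_codeShape.mp hc2).2.2
    omega)]
  -- fiber over same-weight codeword is {c}
  have hfib1 : ∀ c ∈ codeShape C i k,
      ((shape i k).filter (fun P => Dm hC P = c)).card = 1 := by
    intro c hc
    obtain ⟨hcC, hci, hck⟩ := mem_codeShape.mp hc
    rw [Finset.card_eq_one]
    refine ⟨c, ?_⟩
    ext P
    simp only [Finset.mem_filter, Finset.mem_singleton]
    constructor
    · rintro ⟨hP, hD⟩
      obtain ⟨hcard, hi⟩ := mem_shape.mp hP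
      rcases Dm_dom hC P with h | h
      · rw [h, hD]
      · exfalso; rw [hD] at h; exact not_adj_same_card h (hcard.trans hck.symm)
    · rintro rfl
      exact ⟨mem_shape.mpr ⟨hck, hci⟩, Dm_self hC hcC⟩
  -- fiber over weight-(k+1) codeword has k elements
  have hfib2 : ∀ c ∈ codeShape C i (k+1),
      ((shape i k).filter (fun P => Dm hC P = c)).card = k := by
    intro c hc
    obtain ⟨hcC, hci, hck⟩ := mem_codeShape.mp hc
    have hcard_er : ((suppv c).erase i).card = k := by
      rw [Finset.card_erase_of_mem hci, hck]; omega
    rw [← hcard_er]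
    refine (Finset.card_bij
      (fun u hu => mkV ((suppv c).erase u)
        (indepS_subset (Finset.erase_subset _ _) (lucas_indep c))) ?_ ?_ ?_).symm
    · -- maps into fiber
      intro u hu
      have huc : u ∈ suppv c := Finset.mem_of_mem_erase hu
      have hune : u ≠ i := Finset.ne_of_mem_erase hu
      refine Finset.mem_filter.mpr ⟨mem_shape.mpr ⟨?_, ?_⟩, ?_⟩
      · rw [suppv_mkV, Finset.card_erase_of_mem huc, hck]; omega
      · rw [suppv_mkV]; exact Finset.mem_erase.mpr ⟨fun h => hune h.symm, hci⟩
      · refine (Dm_eq hC hcC (Or.inr ?_)).symm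
        refine adj_subset_succ ?_ ?_
        · rw [suppv_mkV]; exact Finset.erase_subset _ _
        · rw [suppv_mkV, Finset.card_erase_of_mem huc, hck]; omega
    · -- injective
      intro u1 h1 u2 h2 heq
      by_contra hne
      have := congrArg suppv heq
      rw [suppv_mkV, suppv_mkV] at this
      have hu2 : u2 ∈ (suppv c).erase u1 :=
        Finset.mem_erase.mpr ⟨fun h => hne h.symm, Finset.mem_of_mem_erase h2⟩
      rw [this] at hu2
      exact (Finset.notMem_erase u2 _) hu2
    · -- surjective
      intro P hP
      obtain ⟨hPs, hPD⟩ := Finset.mem_filter.mp hP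
      obtain ⟨hcard, hi⟩ := mem_shape.mp hPs
      have hadj : (lucasCube n).Adj P c := by
        rcases Dm_dom hC P with h | h
        · exfalso; rw [hPD] at h; rw [h] at hcard; omega
        · rwa [hPD] at h
      rcases adj_iff.mp hadj with ⟨j, ⟨hj, hins⟩ | ⟨hj, hins⟩⟩
      · refine ⟨j, ?_, ?_⟩
        · refine Finset.mem_erase.mpr ⟨fun h => hj (h ▸ hi), ?_⟩
          rw [hins]; exact Finset.mem_insert_self _ _
        · refine (eq_mkV_of_suppv _ ?_).symm
          rw [hins, Finset.erase_insert hj]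
      · exfalso
        rw [hins, Finset.card_insert_of_notMem hj] at hcard
        omega
  calc ∑ c ∈ codeShape C i k, ((shape i k).filter (fun P => Dm hC P = c)).card
        + ∑ c ∈ codeShape C i (k+1), ((shape i k).filter (fun P => Dm hC P = c)).card
      = ∑ _c ∈ codeShape C i k, 1 + ∑ _c ∈ codeShape C i (k+1), k := by
        rw [Finset.sum_congr rfl hfib1, Finset.sum_congr rfl hfib2]
    _ = (codeShape C i k).card + k * (codeShape C i (k+1)).card := by
        rw [Finset.sum_const, Finset.sum_const]
        simp [Nat.mul_comm]

lemma mod1 (hn : 2 ≤ n) : 1 % n = 1 := Nat.mod_eq_of_lt (by omega)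

lemma indep_singleton (hn : 2 ≤ n) (j : Fin n) : indepS ({j} : Finset (Fin n)) := by
  intro x hx y hy
  simp only [Finset.mem_singleton] at hx hy
  rw [hx, hy]
  have hj := j.2
  by_cases h : (j : ℕ) + 1 < n
  · rw [Nat.mod_eq_of_lt h]; omega
  · have : (j : ℕ) + 1 = n := by omega
    rw [this, Nat.mod_self]; omega

lemma L1 (hn : 2 ≤ n) :
    (univ.filter (fun v : LV n => (suppv v).card = 1)).card = n := by
  have := (Finset.card_bij (s := (univ : Finset (Fin n)))
    (t := univ.filter (fun v : LV n => (suppv v).card = 1))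
    (fun (j : Fin n) (_ : j ∈ (univ : Finset (Fin n))) => mkV {j} (indep_singleton hn j))
    ?_ ?_ ?_)
  · rw [← this, Finset.card_univ, Fintype.card_fin]
  · intro j _
    simp only [Finset.mem_filter, Finset.mem_univ, true_and, suppv_mkV,
      Finset.card_singleton, and_self]
  · intro j1 _ j2 _ heq
    have := congrArg suppv heq
    rw [suppv_mkV, suppv_mkV] at this
    exact Finset.singleton_injective this
  · intro v hv
    obtain ⟨j, hj⟩ := Finset.card_eq_one.mp (Finset.mem_filter.mp hv).2
    exact ⟨j, Finset.mem_univ j, (eq_mkV_of_suppv (indep_singleton hn j) hj).symm⟩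

section ZeroStuff
variable [NeZero n]

lemma val_zero' : ((0 : Fin n) : ℕ) = 0 := Fin.val_zero n

lemma indep_pair0 (hn : 4 ≤ n) (j : Fin n) (h2 : 2 ≤ (j : ℕ)) (h3 : (j : ℕ) + 2 ≤ n) :
    indepS ({0, j} : Finset (Fin n)) := by
  intro x hx y hy
  simp only [Finset.mem_insert, Finset.mem_singleton] at hx hy
  rcases hx with rfl | rfl <;> rcases hy with rfl | rfl <;>
    (try simp only [Fin.val_zero]) <;> rw [Nat.mod_eq_of_lt (by omega)] <;> omega

lemma L2 (hn : 4 ≤ n) : (shape (0 : Fin n) 2).card = n - 3 := by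
  have hzne : ∀ j : Fin n, 2 ≤ (j : ℕ) → (0 : Fin n) ≠ j := by
    intro j h2 heq
    have := congrArg Fin.val heq
    rw [val_zero'] at this; omega
  have hcards : ((univ : Finset (Fin n)).filter
      (fun (j : Fin n) => 2 ≤ (j : ℕ) ∧ (j : ℕ) + 2 ≤ n)).card = n - 3 := by
    have := Finset.card_bij
      (s := (univ : Finset (Fin n)).filter (fun (j : Fin n) => 2 ≤ (j : ℕ) ∧ (j : ℕ) + 2 ≤ n))
      (t := Finset.Ico 2 (n-1))
      (i := fun (j : Fin n) _ => (j : ℕ)) ?_ ?_ ?_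
    · rw [this, Nat.card_Ico]; omega
    · intro j hj
      obtain ⟨_, h1, h2⟩ := Finset.mem_filter.mp hj
      show (j : ℕ) ∈ Finset.Ico 2 (n-1)
      exact Finset.mem_Ico.mpr ⟨h1, by omega⟩
    · intro j1 _ j2 _ h; exact Fin.ext h
    · intro m hm
      obtain ⟨h1, h2⟩ := Finset.mem_Ico.mp hm
      exact ⟨⟨m, by omega⟩, Finset.mem_filter.mpr ⟨Finset.mem_univ _, h1,
        by show m + 2 ≤ n; omega⟩, rfl⟩
  rw [← hcards]
  refine (Finset.card_bij
    (s := (univ : Finset (Fin n)).filter (fun (j : Fin n) => 2 ≤ (j : ℕ) ∧ (j : ℕ) + 2 ≤ n))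
    (t := shape (0 : Fin n) 2)
    (i := fun (j : Fin n) hj => mkV {0, j}
      (indep_pair0 hn j (Finset.mem_filter.mp hj).2.1 (Finset.mem_filter.mp hj).2.2))
    ?_ ?_ ?_).symm
  · intro j hj
    obtain ⟨_, h1, h2⟩ := Finset.mem_filter.mp hj
    refine mem_shape.mpr ⟨?_, ?_⟩
    · rw [suppv_mkV, Finset.card_insert_of_notMem (by
        simp only [Finset.mem_singleton]; exact hzne j h1), Finset.card_singleton]
    · rw [suppv_mkV]; exact Finset.mem_insert_self _ _
  · intro j1 hj1 j2 hj2 heq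
    have hs := congrArg suppv heq
    rw [suppv_mkV, suppv_mkV] at hs
    have : j1 ∈ ({0, j2} : Finset (Fin n)) := by
      rw [← hs]; exact Finset.mem_insert_of_mem (Finset.mem_singleton_self _)
    rcases Finset.mem_insert.mp this with h | h
    · exact absurd h.symm (hzne j1 (Finset.mem_filter.mp hj1).2.1)
    · exact Finset.mem_singleton.mp h
  · intro v hv
    obtain ⟨hcard, hmem⟩ := mem_shape.mp hv
    obtain ⟨x, y, hxy, hs⟩ := Finset.card_eq_two.mp hcard
    have h0m : (0 : Fin n) ∈ ({x, y} : Finset (Fin n)) := by rw [← hs]; exact hmem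
    -- find the other element j
    obtain ⟨j, hjne, hsv⟩ : ∃ j : Fin n, j ≠ 0 ∧ suppv v = {(0 : Fin n), j} := by
      rcases Finset.mem_insert.mp h0m with h | h
      · exact ⟨y, by rw [← h] at hxy; exact fun hh => hxy hh.symm, by rw [hs, ← h]⟩
      · refine ⟨x, ?_, ?_⟩
        · rw [Finset.mem_singleton] at h; rw [← h] at hxy; exact hxy
        · rw [Finset.mem_singleton] at h; rw [hs, ← h, Finset.pair_comm]
    have hind := lucas_indep v
    rw [hsv] at hind
    have hj0 : j ∈ ({0, j} : Finset (Fin n)) :=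
      Finset.mem_insert_of_mem (Finset.mem_singleton_self _)
    have h0in : (0 : Fin n) ∈ ({0, j} : Finset (Fin n)) := Finset.mem_insert_self _ _
    have hne1 : (j : ℕ) ≠ 1 := by
      have := hind 0 h0in j hj0
      rw [val_zero', mod1 (by omega)] at this
      omega
    have hne0 : (j : ℕ) ≠ 0 := by
      intro h; exact hjne (Fin.ext (by rw [h, val_zero']))
    have hlt : (j : ℕ) + 2 ≤ n := by
      by_contra hcon
      have hjv := j.2
      have : (j : ℕ) + 1 = n := by omega
      have h2 := hind j hj0 0 h0in
      rw [this, Nat.mod_self, val_zero'] at h2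
      exact h2 rfl
    refine ⟨j, Finset.mem_filter.mpr ⟨Finset.mem_univ _, by omega, hlt⟩,
      (eq_mkV_of_suppv _ hsv).symm⟩

def rotV (t : Fin n) (v : LV n) : LV n :=
  ⟨fun k => v.1 (k + t), by
    rw [isLucas_iff]
    intro x y hx hy heq
    refine (isLucas_iff v.1).mp v.2 (x + t) (y + t) hx hy ?_
    rw [Fin.val_add, Fin.val_add, Nat.mod_add_mod, ← heq, Nat.mod_add_mod]
    congr 1; omega⟩

omit [NeZero n] in
lemma mem_suppv_rotV {t : Fin n} {v : LV n} {k : Fin n} :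
    k ∈ suppv (rotV t v) ↔ k + t ∈ suppv v := by
  simp [mem_suppv, rotV]

lemma rotV_rotV (t s : Fin n) (v : LV n) : rotV t (rotV s v) = rotV (s + t) v := by
  apply Subtype.ext; funext k
  show v.1 (k + t + s) = v.1 (k + (s + t))
  rw [add_assoc, add_comm t s]

lemma rotV_zero (v : LV n) : rotV 0 v = v := by
  apply Subtype.ext; funext k
  show v.1 (k + 0) = v.1 k
  rw [add_zero]

lemma card_suppv_rotV (t : Fin n) (v : LV n) :
    (suppv (rotV t v)).card = (suppv v).card := by
  refine Finset.card_bij (fun k (_ : k ∈ suppv (rotV t v)) => k + t) ?_ ?_ ?_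
  · intro k hk; exact mem_suppv_rotV.mp hk
  · intro k1 _ k2 _ h; exact add_right_cancel h
  · intro m hm
    exact ⟨m - t, mem_suppv_rotV.mpr (by rwa [sub_add_cancel]),
      by show m - t + t = m; exact sub_add_cancel m t⟩

lemma L2' (hn : 4 ≤ n) (i : Fin n) : (shape i 2).card = n - 3 := by
  rw [← L2 hn]
  refine Finset.card_bij (fun v (_ : v ∈ shape i 2) => rotV i v) ?_ ?_ ?_
  · intro v hv
    obtain ⟨hcard, hmem⟩ := mem_shape.mp hv
    refine mem_shape.mpr ⟨by rw [card_suppv_rotV]; exact hcard, ?_⟩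
    rw [mem_suppv_rotV, zero_add]; exact hmem
  · intro v1 _ v2 _ heq
    have := congrArg (rotV (-i)) heq
    rwa [rotV_rotV, rotV_rotV, add_neg_cancel, rotV_zero, rotV_zero] at this
  · intro w hw
    obtain ⟨hcard, hmem⟩ := mem_shape.mp hw
    refine ⟨rotV (-i) w, mem_shape.mpr ⟨?_, ?_⟩, ?_⟩
    · rw [card_suppv_rotV]; exact hcard
    · rw [mem_suppv_rotV, add_neg_cancel]; exact hmem
    · show rotV i (rotV (-i) w) = w
      rw [rotV_rotV, neg_add_cancel, rotV_zero]

end ZeroStuff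

section Triples
variable [NeZero n]

lemma indep_triple0 (hn : 4 ≤ n) (x y : Fin n) (hx2 : 2 ≤ (x : ℕ))
    (hxy : (x : ℕ) + 2 ≤ (y : ℕ)) (hyn : (y : ℕ) + 2 ≤ n) :
    indepS ({0, x, y} : Finset (Fin n)) := by
  intro p hp q hq
  simp only [Finset.mem_insert, Finset.mem_singleton] at hp hq
  rcases hp with rfl | rfl | rfl <;> rcases hq with rfl | rfl | rfl <;>
    (try simp only [Fin.val_zero]) <;> rw [Nat.mod_eq_of_lt (by omega)] <;> omega

lemma card_triple0 (x y : Fin n) (hx2 : 2 ≤ (x : ℕ))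
    (hxy : (x : ℕ) + 2 ≤ (y : ℕ)) :
    ({0, x, y} : Finset (Fin n)).card = 3 := by
  have h0x : (0 : Fin n) ≠ x := fun h => by
    have := congrArg Fin.val h; rw [Fin.val_zero] at this; omega
  have h0y : (0 : Fin n) ≠ y := fun h => by
    have := congrArg Fin.val h; rw [Fin.val_zero] at this; omega
  have hxy' : x ≠ y := fun h => by
    have := congrArg Fin.val h; omega
  rw [Finset.card_insert_of_notMem (by simp [h0x, h0y]),
    Finset.card_insert_of_notMem (by simp [hxy']), Finset.card_singleton]

lemma L3 (hn : 4 ≤ n) :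
    2 * (shape (0 : Fin n) 3).card = (n - 4) * (n - 5) := by
  have hshape : (shape (0 : Fin n) 3).card
      = ((Finset.Ico 2 (n-3)).sigma (fun a => Finset.Ico (a+2) (n-1))).card := by
    refine (Finset.card_bij
      (s := (Finset.Ico 2 (n-3)).sigma (fun a => Finset.Ico (a+2) (n-1)))
      (t := shape (0 : Fin n) 3)
      (i := fun p hp => mkV {0, ⟨p.1, by
          have hm := Finset.mem_sigma.mp hp
          have h1 := Finset.mem_Ico.mp hm.1
          omega⟩, ⟨p.2, by
          have hm := Finset.mem_sigma.mp hp
          have h2 := Finset.mem_Ico.mp hm.2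
          omega⟩}
        (by
          have hm := Finset.mem_sigma.mp hp
          have h1 := Finset.mem_Ico.mp hm.1
          have h2 := Finset.mem_Ico.mp hm.2
          exact indep_triple0 hn _ _ (by simpa using h1.1) (by simp; omega) (by simp; omega)))
      ?_ ?_ ?_).symm
    · intro p hp
      have hm := Finset.mem_sigma.mp hp
      have h1 := Finset.mem_Ico.mp hm.1
      have h2 := Finset.mem_Ico.mp hm.2
      refine mem_shape.mpr ⟨?_, ?_⟩
      · rw [suppv_mkV]
        exact card_triple0 _ _ (by simpa using h1.1) (by simp; omega)
      · rw [suppv_mkV]; exact Finset.mem_insert_self _ _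
    · rintro ⟨a, b⟩ hp ⟨c, d⟩ hq heq
      have hm1 := Finset.mem_sigma.mp hp
      have ha1 := Finset.mem_Ico.mp hm1.1
      have hb1 := Finset.mem_Ico.mp hm1.2
      have hm2 := Finset.mem_sigma.mp hq
      have hc1 := Finset.mem_Ico.mp hm2.1
      have hd1 := Finset.mem_Ico.mp hm2.2
      have hA : 2 ≤ a ∧ a < n - 3 := ha1
      have hB : a + 2 ≤ b ∧ b < n - 1 := hb1
      have hC : 2 ≤ c ∧ c < n - 3 := hc1
      have hD : c + 2 ≤ d ∧ d < n - 1 := hd1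
      have hs := congrArg suppv heq
      simp only [suppv_mkV] at hs
      have hna : a < n := by omega
      have hnb : b < n := by omega
      have hnc : c < n := by omega
      have hnd : d < n := by omega
      have hac : a = 0 ∨ a = c ∨ a = d := by
        have hmm := (Finset.ext_iff.mp hs ⟨a, hna⟩).mp (by simp)
        simpa only [Finset.mem_insert, Finset.mem_singleton, Fin.ext_iff, Fin.val_zero] using hmm
      have hbd : b = 0 ∨ b = c ∨ b = d := by
        have hmm := (Finset.ext_iff.mp hs ⟨b, hnb⟩).mp (by simp)
        simpa only [Finset.mem_insert, Finset.mem_singleton, Fin.ext_iff, Fin.val_zero] using hmm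
      have hca : c = 0 ∨ c = a ∨ c = b := by
        have hmm := (Finset.ext_iff.mp hs ⟨c, hnc⟩).mpr (by simp)
        simpa only [Finset.mem_insert, Finset.mem_singleton, Fin.ext_iff, Fin.val_zero] using hmm
      have heq2 : a = c ∧ b = d := by omega
      obtain ⟨rfl, rfl⟩ := heq2
      rfl
    · intro v hv
      obtain ⟨hcard, hmem⟩ := mem_shape.mp hv
      obtain ⟨p, q, r, hpq, hpr, hqr, hs⟩ := Finset.card_eq_three.mp hcard
      have h0m : (0 : Fin n) ∈ ({p, q, r} : Finset (Fin n)) := by rw [← hs]; exact hmem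
      obtain ⟨u, w, huw, hu0, hw0, hsv⟩ : ∃ u w : Fin n, u ≠ w ∧ u ≠ 0 ∧ w ≠ 0 ∧
          suppv v = {0, u, w} := by
        simp only [Finset.mem_insert, Finset.mem_singleton] at h0m
        rcases h0m with rfl | rfl | rfl
        · exact ⟨q, r, hqr, fun h => hpq h.symm, fun h => hpr h.symm, hs⟩
        · refine ⟨p, r, hpr, hpq, fun h => hqr h.symm, ?_⟩
          rw [hs]; ext k; simp only [Finset.mem_insert, Finset.mem_singleton]; tauto
        · refine ⟨p, q, hpq, hpr, hqr, ?_⟩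
          rw [hs]; ext k; simp only [Finset.mem_insert, Finset.mem_singleton]; tauto
      obtain ⟨x, y, hxy, hx0, hy0, hsv'⟩ : ∃ x y : Fin n, (x : ℕ) < (y : ℕ) ∧ x ≠ 0 ∧ y ≠ 0 ∧
          suppv v = {0, x, y} := by
        rcases Nat.lt_or_ge (u : ℕ) (w : ℕ) with h | h
        · exact ⟨u, w, h, hu0, hw0, hsv⟩
        · have hlt : (w : ℕ) < (u : ℕ) := by
            rcases Nat.lt_or_ge (w : ℕ) (u : ℕ) with h' | h'
            · exact h'
            · exact absurd (Fin.ext (by omega)) huw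
          refine ⟨w, u, hlt, hw0, hu0, ?_⟩
          rw [hsv]; ext k; simp only [Finset.mem_insert, Finset.mem_singleton]; tauto
      have hind := lucas_indep v
      rw [hsv'] at hind
      have hxm : x ∈ ({0, x, y} : Finset (Fin n)) :=
        Finset.mem_insert_of_mem (Finset.mem_insert_self _ _)
      have hym : y ∈ ({0, x, y} : Finset (Fin n)) :=
        Finset.mem_insert_of_mem (Finset.mem_insert_of_mem (Finset.mem_singleton_self _))
      have h0in : (0 : Fin n) ∈ ({0, x, y} : Finset (Fin n)) := Finset.mem_insert_self _ _
      have hx2 : 2 ≤ (x : ℕ) := by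
        have hne0 : (x : ℕ) ≠ 0 := fun h => hx0 (Fin.ext (by rw [Fin.val_zero]; exact h))
        have h1 := hind 0 h0in x hxm
        rw [Fin.val_zero, mod1 (by omega)] at h1
        omega
      have hyn : (y : ℕ) + 2 ≤ n := by
        by_contra hcon
        have hy2 := y.2
        have h1 := hind y hym 0 h0in
        rw [show (y : ℕ) + 1 = n from by omega, Nat.mod_self, Fin.val_zero] at h1
        exact h1 rfl
      have hxy2 : (x : ℕ) + 2 ≤ (y : ℕ) := by
        have h1 := hind x hxm y hym
        rw [Nat.mod_eq_of_lt (by omega)] at h1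
        omega
      refine ⟨⟨(x : ℕ), (y : ℕ)⟩, Finset.mem_sigma.mpr
        ⟨Finset.mem_Ico.mpr ⟨hx2, by show (x : ℕ) < n - 3; omega⟩,
         Finset.mem_Ico.mpr ⟨by show (x : ℕ) + 2 ≤ (y : ℕ); omega,
           by show (y : ℕ) < n - 1; omega⟩⟩, ?_⟩
      apply suppv_inj
      rw [suppv_mkV, hsv']
  rw [hshape, Finset.card_sigma]
  have e1 : ∑ a ∈ Finset.Ico 2 (n-3), (Finset.Ico (a+2) (n-1)).card
      = ∑ a ∈ Finset.Ico 2 (n-3), (n - 3 - a) :=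
    Finset.sum_congr rfl (fun a _ => by rw [Nat.card_Ico]; omega)
  have e2 : ∑ a ∈ Finset.Ico 2 (n-3), (n - 3 - a) = ∑ i ∈ Finset.range (n-5), (n - 5 - i) := by
    rw [Finset.sum_Ico_eq_sum_range, show n - 3 - 2 = n - 5 from by omega]
    exact Finset.sum_congr rfl (fun i _ => by omega)
  have e3 : ∑ i ∈ Finset.range (n-5), (n - 5 - i) = ∑ i ∈ Finset.range (n-5), (i+1) := by
    rw [← Finset.sum_range_reflect (fun i => n - 5 - i) (n-5)]
    exact Finset.sum_congr rfl (fun j hj => by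
      have := Finset.mem_range.mp hj; omega)
  have e4 : ∑ i ∈ Finset.range (n-5+1), i = ∑ i ∈ Finset.range (n-5), (i+1) := by
    rw [Finset.sum_range_succ' (fun i => i) (n-5), Nat.add_zero]
  have e5 := Finset.sum_range_id_mul_two (n-5+1)
  have e6 : (n-5+1) * (n-5+1-1) = (n-4)*(n-5) := by
    rcases Nat.lt_or_ge n 5 with h5 | h5
    · have h4 : n = 4 := by omega
      subst h4; rfl
    · rw [show n-5+1-1 = n-5 from by omega, show n-5+1 = n-4 from by omega]
  rw [e1, e2, e3, ← e4, mul_comm, e5, e6]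

end Triples

lemma arith1 (N q : ℕ) (hn : 4 ≤ N) (h : (N-4)*(N-5) = (N-3) + 6*q) : False := by
  rcases Nat.lt_or_ge N 6 with h6 | h6
  · interval_cases N <;> omega
  · have e1 : N - 4 = (N - 5) + 1 := by omega
    have e2 : N - 3 = (N - 5) + 2 := by omega
    rw [e1, e2] at h
    obtain ⟨m, hm⟩ : ∃ m, N - 5 = m := ⟨_, rfl⟩
    rw [hm] at h
    obtain ⟨k, hk⟩ : ∃ k, m = 3*k ∨ m = 3*k+1 ∨ m = 3*k+2 := ⟨m/3, by omega⟩
    rcases hk with rfl | rfl | rfl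
    · rw [show (3*k+1)*(3*k) = 9*(k*k) + 3*k from by ring] at h
      generalize k*k = K at h; omega
    · rw [show (3*k+1+1)*(3*k+1) = 9*(k*k) + 9*k + 2 from by ring] at h
      generalize k*k = K at h; omega
    · rw [show (3*k+2+1)*(3*k+2) = 9*(k*k) + 15*k + 6 from by ring] at h
      generalize k*k = K at h; omega

lemma case1 (hn : 4 ≤ n) {C : Set (LV n)} (hC : IsPerfectCode (lucasCube n) C)
    (hz : (zV : LV n) ∈ C) : False := by
  haveI : NeZero n := ⟨by omega⟩
  have h1 : ∀ c ∈ C, (suppv c).card ≠ 1 := by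
    intro c hc h1
    obtain ⟨j, hj⟩ := Finset.card_eq_one.mp h1
    have hadj : (lucasCube n).Adj zV c :=
      adj_of_insert (j := j) (by simp) (by rw [hj, suppv_zV]; rfl)
    have e1 := Dm_eq hC hc (Or.inr hadj)
    have e2 := Dm_eq hC hz (Or.inl rfl)
    have e3 : c = zV := e1.trans e2.symm
    rw [e3] at h1; rw [suppv_zV] at h1; simp at h1
  have h2 : ∀ c ∈ C, (suppv c).card ≠ 2 := by
    intro c hc h2
    obtain ⟨x, y, hxy, hs⟩ := Finset.card_eq_two.mp h2
    have hindx : indepS ({x} : Finset (Fin n)) := indep_singleton (by omega) x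
    have hadj1 : (lucasCube n).Adj (mkV {x} hindx) zV :=
      ((adj_of_insert (x := zV) (by simp) (by rw [suppv_mkV, suppv_zV]; rfl)).symm)
    have hadj2 : (lucasCube n).Adj (mkV {x} hindx) c := by
      refine adj_of_insert (j := y) (by rw [suppv_mkV]; simpa using fun h => hxy h.symm) ?_
      rw [suppv_mkV, hs]
      ext k; simp only [Finset.mem_insert, Finset.mem_singleton]; tauto
    have e1 := Dm_eq hC hz (Or.inr hadj1)
    have e2 := Dm_eq hC hc (Or.inr hadj2)
    have e3 : c = zV := e2.trans e1.symm
    rw [e3, suppv_zV] at h2; simp at h2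
  have hm2 := master hC 0 2 (by
    intro P hP
    obtain ⟨hcard, _⟩ := mem_shape.mp hP
    rcases Dm_dom hC P with h | h
    · left; rw [← h]; exact hcard
    · rcases adj_card h with hc | hc
      · right; rw [hc, hcard]
      · exfalso; exact h1 _ (Dm_mem hC P) (by omega))
  have hm3 := master hC 0 3 (by
    intro P hP
    obtain ⟨hcard, _⟩ := mem_shape.mp hP
    rcases Dm_dom hC P with h | h
    · left; rw [← h]; exact hcard
    · rcases adj_card h with hc | hc
      · right; rw [hc, hcard]
      · exfalso; exact h2 _ (Dm_mem hC P) (by omega))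
  have hcs2 : (codeShape C 0 2).card = 0 := by
    rw [Finset.card_eq_zero]
    rw [Finset.eq_empty_iff_forall_notMem]
    intro c hc
    obtain ⟨hcC, _, hcard⟩ := mem_codeShape.mp hc
    exact h2 c hcC hcard
  have hL2 := L2' hn (0 : Fin n)
  have hL3 := L3 hn
  norm_num at hm2 hm3
  rw [hL2, hcs2] at hm2
  rw [hm3] at hL3
  refine arith1 n ((codeShape C 0 4).card) hn ?_
  rw [← hL3]
  omega

lemma case2 (hn : 4 ≤ n) {C : Set (LV n)} (hC : IsPerfectCode (lucasCube n) C)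
    (a : Fin n) (sa : LV n) (hsa : suppv sa = {a}) (haC : sa ∈ C) : False := by
  haveI : NeZero n := ⟨by omega⟩
  have hzadj : (lucasCube n).Adj zV sa := adj_of_insert (by simp) (by rw [hsa, suppv_zV]; rfl)
  have hzn : (zV : LV n) ∉ C := by
    intro hz
    have e1 := Dm_eq hC hz (Or.inl rfl)
    have e2 := Dm_eq hC haC (Or.inr hzadj)
    have e3 : sa = zV := e2.trans e1.symm
    rw [e3, suppv_zV] at hsa
    exact (Finset.singleton_ne_empty a) hsa.symm
  have huniq : ∀ c ∈ C, (suppv c).card = 1 → c = sa := by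
    intro c hc h1
    obtain ⟨j, hj⟩ := Finset.card_eq_one.mp h1
    have hadjc : (lucasCube n).Adj zV c := adj_of_insert (by simp) (by rw [hj, suppv_zV]; rfl)
    exact (Dm_eq hC hc (Or.inr hadjc)).trans (Dm_eq hC haC (Or.inr hzadj)).symm
  -- singleton count
  have hsamem : sa ∈ univ.filter (fun v : LV n => (suppv v).card = 1) :=
    Finset.mem_filter.mpr ⟨Finset.mem_univ _, by rw [hsa]; simp⟩
  have hcardS1 : ((univ.filter (fun v : LV n => (suppv v).card = 1)).erase sa).card = n - 1 := by
    rw [Finset.card_erase_of_mem hsamem, L1 (by omega)]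
  have hmap : ∀ v ∈ (univ.filter (fun v : LV n => (suppv v).card = 1)).erase sa,
      Dm hC v ∈ univ.filter (fun c : LV n => c ∈ C ∧ (suppv c).card = 2) := by
    intro v hv
    have hvne := Finset.ne_of_mem_erase hv
    have hv1 := (Finset.mem_filter.mp (Finset.mem_of_mem_erase hv)).2
    refine Finset.mem_filter.mpr ⟨Finset.mem_univ _, Dm_mem hC v, ?_⟩
    rcases Dm_dom hC v with h | h
    · exfalso
      have hvC : v ∈ C := by rw [h]; exact Dm_mem hC v
      exact hvne (huniq v hvC hv1)
    · rcases adj_card h with hc | hc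
      · rw [hc, hv1]
      · exfalso
        have h0 : (suppv (Dm hC v)).card = 0 := by omega
        have : Dm hC v = zV := suppv_inj (by rw [suppv_zV]; exact Finset.card_eq_zero.mp h0)
        exact hzn (this ▸ Dm_mem hC v)
  have hfib : ∀ c ∈ univ.filter (fun c : LV n => c ∈ C ∧ (suppv c).card = 2),
      (((univ.filter (fun v : LV n => (suppv v).card = 1)).erase sa).filter
        (fun v => Dm hC v = c)).card = 2 := by
    intro c hc
    obtain ⟨-, hcC, hc2⟩ := Finset.mem_filter.mp hc
    have hanotin : a ∉ suppv c := by
      intro ha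
      have hadj : (lucasCube n).Adj sa c := by
        refine adj_subset_succ ?_ ?_
        · rw [hsa]; intro k hk
          rw [Finset.mem_singleton] at hk; subst hk; exact ha
        · rw [hsa, hc2]; rfl
      have e1 := Dm_eq hC hcC (Or.inr hadj)
      have e2 := Dm_eq hC haC (Or.inl rfl)
      have e3 : c = sa := e1.trans e2.symm
      rw [e3, hsa] at hc2; simp at hc2
    rw [← hc2]
    refine (Finset.card_bij
      (s := suppv c)
      (t := ((univ.filter (fun v : LV n => (suppv v).card = 1)).erase sa).filter
        (fun v => Dm hC v = c))
      (i := fun u _ => mkV {u} (indep_singleton (by omega) u)) ?_ ?_ ?_).symm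
    · intro u hu
      refine Finset.mem_filter.mpr ⟨Finset.mem_erase.mpr ⟨?_, Finset.mem_filter.mpr
        ⟨Finset.mem_univ _, by rw [suppv_mkV]; simp⟩⟩, ?_⟩
      · intro hequ
        have hh := congrArg suppv hequ
        rw [suppv_mkV, hsa] at hh
        exact hanotin ((Finset.singleton_injective hh) ▸ hu)
      · refine (Dm_eq hC hcC (Or.inr ?_)).symm
        refine adj_subset_succ ?_ ?_
        · rw [suppv_mkV]; intro k hk
          rw [Finset.mem_singleton] at hk; subst hk; exact hu
        · rw [suppv_mkV, hc2]; rfl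
    · intro u1 _ u2 _ heq
      have hh := congrArg suppv heq
      rw [suppv_mkV, suppv_mkV] at hh
      exact Finset.singleton_injective hh
    · intro v hv
      obtain ⟨hv1, hvD⟩ := Finset.mem_filter.mp hv
      have hv1' := (Finset.mem_filter.mp (Finset.mem_of_mem_erase hv1)).2
      obtain ⟨u, hu⟩ := Finset.card_eq_one.mp hv1'
      have hadj : (lucasCube n).Adj v c := by
        rcases Dm_dom hC v with h | h
        · exfalso; rw [hvD] at h; rw [h, hc2] at hv1'; omega
        · rwa [hvD] at h
      have husub : u ∈ suppv c := by
        rcases adj_iff.mp hadj with ⟨j, ⟨hj, hins⟩ | ⟨hj, hins⟩⟩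
        · rw [hins]
          exact Finset.mem_insert_of_mem (by rw [hu]; exact Finset.mem_singleton_self u)
        · exfalso
          rw [hins, Finset.card_insert_of_notMem hj, hc2] at hv1'; omega
      exact ⟨u, husub, (eq_mkV_of_suppv _ hu).symm⟩
  have hsum := Finset.card_eq_sum_card_fiberwise hmap
  rw [Finset.sum_congr rfl hfib, Finset.sum_const, smul_eq_mul, hcardS1] at hsum
  -- hsum : n - 1 = #CP * 2
  -- second count at i = a + 1
  have hone : ((1 : Fin n) : ℕ) = 1 := by
    rw [Fin.val_one']; exact mod1 (by omega)
  have hia : ((a + 1 : Fin n) : ℕ) = ((a : ℕ) + 1) % n := by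
    rw [Fin.val_add, hone]
  have hindi : indepS ({a + 1} : Finset (Fin n)) := indep_singleton (by omega) _
  have hm2 := master hC (a + 1) 2 (by
    intro P hP
    obtain ⟨hcard, hPmem⟩ := mem_shape.mp hP
    rcases Dm_dom hC P with h | h
    · left; rw [← h]; exact hcard
    · rcases adj_card h with hc | hc
      · right; rw [hc, hcard]
      · exfalso
        have hD1 : (suppv (Dm hC P)).card = 1 := by omega
        have hDsa : Dm hC P = sa := huniq _ (Dm_mem hC P) hD1
        rw [hDsa] at h
        have hamem : a ∈ suppv P := by
          rcases adj_iff.mp h with ⟨j, ⟨hj, hins⟩ | ⟨hj, hins⟩⟩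
          · exfalso
            rw [hDsa] at hD1
            rw [hins, Finset.card_insert_of_notMem hj, hcard] at hD1; omega
          · rw [hins]
            exact Finset.mem_insert_of_mem (by rw [hsa]; exact Finset.mem_singleton_self a)
        exact (lucas_indep P a hamem (a+1) hPmem) hia.symm)
  have hL2i := L2' hn (a + 1)
  have hT2 : (codeShape C (a + 1) 2).card = 1 := by
    rw [Finset.card_eq_one]
    refine ⟨Dm hC (mkV {a+1} hindi), ?_⟩
    have hDprop : Dm hC (mkV {a+1} hindi) ∈ codeShape C (a+1) 2 := by
      rcases Dm_dom hC (mkV {a+1} hindi) with h | h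
      · exfalso
        have hmC : mkV {a+1} hindi ∈ C := by rw [h]; exact Dm_mem hC _
        have := huniq _ hmC (by rw [suppv_mkV]; simp)
        have hh := congrArg suppv this
        rw [suppv_mkV, hsa] at hh
        have hia2 : (a + 1 : Fin n) = a := Finset.singleton_injective hh
        have := congrArg Fin.val hia2
        rw [hia] at this
        have hav := a.2
        rcases Nat.lt_or_ge ((a:ℕ)+1) n with hlt | hge
        · rw [Nat.mod_eq_of_lt hlt] at this; omega
        · have : ((a:ℕ)+1) % n = 0 := by
            rw [show (a:ℕ)+1 = n from by omega, Nat.mod_self]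
          omega
      · rcases adj_card h with hc | hc
        · refine mem_codeShape.mpr ⟨Dm_mem hC _, ?_, ?_⟩
          · rcases adj_iff.mp h with ⟨j, ⟨hj, hins⟩ | ⟨hj, hins⟩⟩
            · rw [hins]
              exact Finset.mem_insert_of_mem (by rw [suppv_mkV]; exact Finset.mem_singleton_self _)
            · exfalso
              rw [suppv_mkV] at hins
              have hcc := congrArg Finset.card hins
              rw [Finset.card_singleton, Finset.card_insert_of_notMem hj] at hcc
              rw [suppv_mkV, Finset.card_singleton] at hc
              omega
          · rw [hc, suppv_mkV]; rfl
        · exfalso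
          rw [suppv_mkV, Finset.card_singleton] at hc
          have h0 : (suppv (Dm hC (mkV {a+1} hindi))).card = 0 := by omega
          have : Dm hC (mkV {a+1} hindi) = zV :=
            suppv_inj (by rw [suppv_zV]; exact Finset.card_eq_zero.mp h0)
          exact hzn (this ▸ Dm_mem hC _)
    ext c
    simp only [Finset.mem_singleton]
    constructor
    · intro hcm
      obtain ⟨hcC, hcmem, hc2⟩ := mem_codeShape.mp hcm
      refine Dm_eq hC hcC (Or.inr ?_)
      refine adj_subset_succ ?_ ?_
      · rw [suppv_mkV]; intro k hk
        rw [Finset.mem_singleton] at hk; subst hk; exact hcmem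
      · rw [suppv_mkV, hc2]; rfl
    · rintro rfl
      exact hDprop
  rw [hL2i, hT2] at hm2
  omega

lemma hardLemma (hn : 4 ≤ n) : ¬ ∃ C : Set (LV n), IsPerfectCode (lucasCube n) C := by
  rintro ⟨C, hC⟩
  haveI : NeZero n := ⟨by omega⟩
  rcases Dm_dom hC zV with h | h
  · refine case1 hn hC ?_
    rw [h]; exact Dm_mem hC zV
  · have hcd : (suppv (Dm hC zV)).card = 1 := by
      rcases adj_iff.mp h with ⟨j, ⟨hj, hins⟩ | ⟨hj, hins⟩⟩
      · rw [hins, suppv_zV]; simp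
      · exfalso
        rw [suppv_zV] at hins
        exact (Finset.insert_ne_empty j _) hins.symm
    obtain ⟨aa, ha⟩ := Finset.card_eq_one.mp hcd
    exact case2 hn hC aa (Dm hC zV) ha (Dm_mem hC zV)

lemma smallLemma (hn : n ≤ 3) : ∃ C : Set (LV n), IsPerfectCode (lucasCube n) C := by
  refine ⟨{zV}, fun v => ⟨zV, ⟨rfl, ?_⟩, ?_⟩⟩
  · by_cases hv : v = zV
    · exact Or.inl hv
    · right
      have hle : (suppv v).card ≤ 1 := by
        by_contra hgt
        obtain ⟨x, hx, y, hy, hxyne⟩ :=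
          Finset.one_lt_card.mp (show 1 < (suppv v).card by omega)
        have h1 := lucas_indep v x hx y hy
        have h2 := lucas_indep v y hy x hx
        have h3 := lucas_indep v x hx x hx
        have hne : (x : ℕ) ≠ (y : ℕ) := fun hh => hxyne (Fin.ext hh)
        have hx2 := x.2
        have hy2 := y.2
        have hpos := x.pos
        rcases (show n = 1 ∨ n = 2 ∨ n = 3 from by omega) with rfl | rfl | rfl <;> omega
      have hge : suppv v ≠ ∅ := fun he => hv (suppv_inj (by rw [he, suppv_zV]))
      have h1 : (suppv v).card = 1 := by
        have hpos : 0 < (suppv v).card :=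
          Finset.card_pos.mpr (Finset.nonempty_iff_ne_empty.mpr hge)
        omega
      obtain ⟨j, hj⟩ := Finset.card_eq_one.mp h1
      exact ((adj_of_insert (x := zV) (by simp) (by rw [hj, suppv_zV]; rfl)).symm)
  · rintro c ⟨hc, -⟩
    exact hc

end

/-- For n ≥ 4 the Lucas cube Λ_n admits no perfect code; combined with the easy
cases, Λ_n admits a perfect code if and only if n ≤ 3. -/
theorem stmt16 (n : ℕ) :
    (4 ≤ n → ¬ ∃ C : Set {b : Fin n → Bool // isLucas b}, IsPerfectCode (lucasCube n) C)
    ∧ ((∃ C : Set {b : Fin n → Bool // isLucas b}, IsPerfectCode (lucasCube n) C) ↔ n ≤ 3) := by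
  refine ⟨fun hn hex => hardLemma hn hex, ?_, fun hle => smallLemma hle⟩
  intro hex
  by_contra h
  exact hardLemma (by omega) hex
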